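/- Let L be a distributive lattice with greatest element 1 (included as a constant). The set H¹(L) of lattice homomorphisms φ : L → 2 with φ(1) = 1 is a closed subset of the product space 2^L (2 discrete), and with the pointwise order and subspace topology it is a compact Priestley space whose greatest element is the constant map 1. -/

import Mathlib

/-- A map between lattices preserving binary joins and meets (no bound constants
in the language). -/
def IsLatHom {α β : Type*} [Lattice α] [Lattice β] (f : α → β) : Prop :=
  (∀ a b, f (a ⊔ b) = f a ⊔ f b) ∧ (∀ a b, f (a ⊓ b) = f a ⊓ f b)

/-- `H¹(L)` for a distributive lattice `L` with greatest element `1`: the set of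
homomorphisms `φ : L → 2` (preserving `∨`, `∧` and `1`, i.e. `φ(1) = 1`). -/
def H1Set (L : Type*) [Lattice L] [OrderTop L] : Set (L → Bool) :=
  {f | IsLatHom f ∧ f ⊤ = true}

/-- `H¹(L)` with the subspace topology from `2^L` (`2 = Bool` discrete) and the
pointwise order. -/
abbrev H1Sp (L : Type*) [Lattice L] [OrderTop L] : Type _ := ↥(H1Set L)

theorem cont_apply2 {L : Type*} (g : Bool → Bool → Bool) (a b : L) :
    Continuous fun f : L → Bool => g (f a) (f b) := by
  have h : Continuous fun p : Bool × Bool => g p.1 p.2 := continuous_of_discreteTopology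
  exact h.comp (Continuous.prodMk (continuous_apply (A := fun _ : L => Bool) a) (continuous_apply b))

theorem H1Set_isClosed (L : Type*) [DistribLattice L] [OrderTop L] :
    IsClosed (H1Set L) := by
  have : H1Set L =
      (⋂ a, ⋂ b, {f : L → Bool | f (a ⊔ b) = f a ⊔ f b}) ∩
      ((⋂ a, ⋂ b, {f : L → Bool | f (a ⊓ b) = f a ⊓ f b}) ∩
        {f : L → Bool | f ⊤ = true}) := by
    ext f
    simp [H1Set, IsLatHom, Set.mem_iInter, and_assoc]
  rw [this]
  refine IsClosed.inter ?_ (IsClosed.inter ?_ ?_)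
  · exact isClosed_iInter fun a => isClosed_iInter fun b =>
      isClosed_eq (continuous_apply _) (cont_apply2 (· ⊔ ·) a b)
  · exact isClosed_iInter fun a => isClosed_iInter fun b =>
      isClosed_eq (continuous_apply _) (cont_apply2 (· ⊓ ·) a b)
  · exact isClosed_eq (continuous_apply _) continuous_const

/-- Let `L` be a distributive lattice with greatest element `1`
(as a constant).  The set `H¹(L)` of lattice homomorphisms `φ : L → 2` with `φ(1) = 1`
is closed in the product space `2^L`, and with the pointwise order and subspace
topology it is a compact Priestley space whose greatest element is the constant
map `1`. -/
theorem H1Sp_closed_compact_priestley (L : Type*) [DistribLattice L] [OrderTop L] :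
    IsClosed (H1Set L) ∧ CompactSpace (H1Sp L) ∧ PriestleySpace (H1Sp L) ∧
      (∃ t : H1Sp L, (t : L → Bool) = (fun _ => true) ∧ ∀ h : H1Sp L, h ≤ t) := by
  have hcl := H1Set_isClosed L
  refine ⟨hcl, ?_, ?_, ?_⟩
  · exact isCompact_iff_compactSpace.mp (hcl.isCompact)
  · refine ⟨@fun x y hxy => ?_⟩
    have : ¬ ∀ a, (x : L → Bool) a ≤ (y : L → Bool) a := fun h => hxy fun a => h a
    push_neg at this
    obtain ⟨a, ha⟩ := this
    rw [Bool.lt_iff] at ha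
    obtain ⟨hy, hx⟩ := ha
    refine ⟨{f : H1Sp L | (f : L → Bool) a = true}, ?_, ?_, hx, by simp [hy]⟩
    · constructor
      · exact (isClosed_eq (Continuous.comp (continuous_apply (A := fun _ : L => Bool) a) continuous_subtype_val)
          continuous_const)
      · exact IsOpen.preimage (Continuous.comp (continuous_apply (A := fun _ : L => Bool) a) continuous_subtype_val)
          (isOpen_discrete {true})
    · intro u v huv hu
      have : (u : L → Bool) a ≤ (v : L → Bool) a := huv a
      rw [hu] at this
      exact le_antisymm (Bool.le_true _) this
  · have hmem : (fun _ : L => true) ∈ H1Set L :=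
      ⟨⟨fun _ _ => rfl, fun _ _ => rfl⟩, rfl⟩
    exact ⟨⟨_, hmem⟩, rfl, fun h a => Bool.le_true _⟩
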